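/- The abelianization of the integer Heisenberg group at level 2 is isomorphic to ℤ × ℤ × ZMod 2. -/

import Mathlib

def HeisMul (x y : ℤ × ℤ × ℤ) : ℤ × ℤ × ℤ :=
  (x.1 + y.1, x.2.1 + y.2.1, x.2.2 + y.2.2 + x.1 * y.2.1 - x.2.1 * y.1)

def HeisInv (x : ℤ × ℤ × ℤ) : ℤ × ℤ × ℤ := (-x.1, -x.2.1, -x.2.2)

/-- The integer Heisenberg group at level 2. -/
def Heis : Type := ℤ × ℤ × ℤ

instance : Group Heis where
  mul := HeisMul
  one := ((0 : ℤ), (0 : ℤ), (0 : ℤ))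
  inv := HeisInv
  mul_assoc a b c := by
    show HeisMul (HeisMul a b) c = HeisMul a (HeisMul b c)
    simp only [HeisMul, Prod.mk.injEq]
    refine ⟨by ring, by ring, by ring⟩
  one_mul a := by
    show HeisMul ((0:ℤ),(0:ℤ),(0:ℤ)) a = a
    obtain ⟨a1, a2, a3⟩ := (a : ℤ × ℤ × ℤ)
    simp [HeisMul]
  mul_one a := by
    show HeisMul a ((0:ℤ),(0:ℤ),(0:ℤ)) = a
    obtain ⟨a1, a2, a3⟩ := (a : ℤ × ℤ × ℤ)
    simp [HeisMul]
  inv_mul_cancel a := by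
    show HeisMul (HeisInv a) a = ((0:ℤ),(0:ℤ),(0:ℤ))
    obtain ⟨a1, a2, a3⟩ := (a : ℤ × ℤ × ℤ)
    simp only [HeisMul, HeisInv, Prod.mk.injEq]
    refine ⟨by ring, by ring, by ring⟩

def heisHom : Heis →* Multiplicative (ℤ × ℤ × ZMod 2) where
  toFun x := Multiplicative.ofAdd ((x : ℤ × ℤ × ℤ).1, (x : ℤ × ℤ × ℤ).2.1,
    (((x : ℤ × ℤ × ℤ).2.2 + (x : ℤ × ℤ × ℤ).1 * (x : ℤ × ℤ × ℤ).2.1 : ℤ) : ZMod 2))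
  map_one' := by
    show Multiplicative.ofAdd (((0:ℤ),(0:ℤ),(0:ℤ)).1, ((0:ℤ),(0:ℤ),(0:ℤ)).2.1,
      ((((0:ℤ),(0:ℤ),(0:ℤ)).2.2 + ((0:ℤ),(0:ℤ),(0:ℤ)).1 * ((0:ℤ),(0:ℤ),(0:ℤ)).2.1 : ℤ)
        : ZMod 2)) = 1
    simp
  map_mul' x y := by
    show Multiplicative.ofAdd ((HeisMul x y).1, (HeisMul x y).2.1,
        (((HeisMul x y).2.2 + (HeisMul x y).1 * (HeisMul x y).2.1 : ℤ) : ZMod 2)) = _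
    simp only [HeisMul, ← ofAdd_add]
    congr 1
    simp only [Prod.mk_add_mk]
    refine Prod.ext rfl (Prod.ext rfl ?_)
    show _ = ((((x : ℤ × ℤ × ℤ).2.2 + _ : ℤ) : ZMod 2) + _)
    have h2 : (2 : ZMod 2) = 0 := by decide
    push_cast
    linear_combination (((x : ℤ × ℤ × ℤ).1 : ZMod 2) * ((y : ℤ × ℤ × ℤ).2.1 : ZMod 2)) * h2

open scoped commutatorElement in
theorem heis_of_even_central (k : ℤ) :
    Abelianization.of (show Heis from ((0 : ℤ), (0 : ℤ), 2 * k)) = 1 := by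
  have hx : (show Heis from ((0 : ℤ), (0 : ℤ), 2 * k)) =
      ⁅(show Heis from ((k : ℤ), (0 : ℤ), (0 : ℤ))),
       (show Heis from ((0 : ℤ), (1 : ℤ), (0 : ℤ)))⁆ := by
    show _ = HeisMul (HeisMul (HeisMul _ _) (HeisInv _)) (HeisInv _)
    simp only [HeisMul, HeisInv, Prod.mk.injEq]
    refine ⟨by ring, by ring, by ring⟩
  rw [hx, map_commutatorElement]
  exact commutatorElement_eq_one_iff_commute.2 (mul_comm _ _)

/-- The abelianization of the integer Heisenberg group at level 2 is
isomorphic to ℤ × ℤ × (ℤ/2ℤ). -/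
theorem heis_abelianization :
    Nonempty (Abelianization Heis ≃* Multiplicative (ℤ × ℤ × ZMod 2)) := by
  refine ⟨MulEquiv.ofBijective (Abelianization.lift heisHom) ⟨?_, ?_⟩⟩
  · rw [injective_iff_map_eq_one]
    intro a ha
    obtain ⟨x, rfl⟩ := Quotient.exists_rep a
    have hx : (Quotient.mk _ x : Abelianization Heis) = Abelianization.of x := rfl
    rw [hx] at ha ⊢
    rw [Abelianization.lift_apply_of] at ha
    have h : ((x : ℤ × ℤ × ℤ).1, (x : ℤ × ℤ × ℤ).2.1,
        (((x : ℤ × ℤ × ℤ).2.2 + (x : ℤ × ℤ × ℤ).1 * (x : ℤ × ℤ × ℤ).2.1 : ℤ) : ZMod 2))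
        = ((0 : ℤ), (0 : ℤ), (0 : ZMod 2)) := Multiplicative.ofAdd.injective ha
    have h1 : (x : ℤ × ℤ × ℤ).1 = 0 := (Prod.ext_iff.1 h).1
    have h2 : (x : ℤ × ℤ × ℤ).2.1 = 0 := (Prod.ext_iff.1 (Prod.ext_iff.1 h).2).1
    have h3 : (((x : ℤ × ℤ × ℤ).2.2 + (x : ℤ × ℤ × ℤ).1 * (x : ℤ × ℤ × ℤ).2.1 : ℤ)
        : ZMod 2) = 0 := (Prod.ext_iff.1 (Prod.ext_iff.1 h).2).2
    rw [h1, h2, mul_zero, add_zero] at h3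
    obtain ⟨k, hk⟩ := (ZMod.intCast_zmod_eq_zero_iff_dvd _ 2).1 h3
    have hx2 : x = (show Heis from ((0 : ℤ), (0 : ℤ), 2 * k)) := by
      show (x : ℤ × ℤ × ℤ) = ((0 : ℤ), (0 : ℤ), 2 * k)
      refine Prod.ext h1 (Prod.ext h2 ?_)
      show (x : ℤ × ℤ × ℤ).2.2 = 2 * k
      rw [hk]; norm_num
    rw [hx2]
    exact heis_of_even_central k
  · intro y
    refine ⟨Abelianization.of (show Heis from (y.toAdd.1, y.toAdd.2.1,
      ((y.toAdd.2.2.val : ℤ) - y.toAdd.1 * y.toAdd.2.1))), ?_⟩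
    rw [Abelianization.lift_apply_of]
    show Multiplicative.ofAdd (y.toAdd.1, y.toAdd.2.1,
      ((((y.toAdd.2.2.val : ℤ) - y.toAdd.1 * y.toAdd.2.1)
        + y.toAdd.1 * y.toAdd.2.1 : ℤ) : ZMod 2)) = y
    rw [sub_add_cancel]
    have hc : (((y.toAdd.2.2.val : ℤ)) : ZMod 2) = y.toAdd.2.2 := by
      push_cast
      simp [ZMod.natCast_val, ZMod.cast_id]
    rw [hc]
    simp
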